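/- On the dihedral quandle Q = ℤ/4ℤ with operation i ∗ j = 2j − i (mod 4), the function φ₀ : Q × Q → Multiplicative ℤ defined by φ₀(0, 1) = φ₀(0, 3) = t (where t denotes the generator Multiplicative.ofAdd 1) and φ₀(a, b) = 1 for all other pairs (a, b), is a 2-cocycle: φ₀(a, a) = 1 for all a, and φ₀(a, b) · φ₀(a ∗ b, c) = φ₀(a, c) · φ₀(a ∗ c, b ∗ c) for all a, b, c ∈ Q. -/
import Mathlib


/-- The dihedral quandle operation on `ZMod 4`: `i ∗ j = 2j - i`. -/
def dihedralOp (i j : ZMod 4) : ZMod 4 := 2 * j - i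

/-- The 2-cocycle `φ₀` on the dihedral quandle `ZMod 4`, with values in
`Multiplicative ℤ`: `φ₀ 0 1 = φ₀ 0 3 = t` (the generator) and `φ₀ = 1`
otherwise. -/
def phi₀ (a b : ZMod 4) : Multiplicative ℤ :=
  if (a = 0 ∧ b = 1) ∨ (a = 0 ∧ b = 3) then Multiplicative.ofAdd (1 : ℤ) else 1

/-- `φ₀` is a 2-cocycle on the dihedral quandle `ZMod 4`. -/
theorem phi₀_isTwoCocycle :
    (∀ a : ZMod 4, phi₀ a a = 1) ∧
      ∀ a b c : ZMod 4,
        phi₀ a b * phi₀ (dihedralOp a b) c =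
          phi₀ a c * phi₀ (dihedralOp a c) (dihedralOp b c) := by
  exact ⟨by decide, by decide⟩
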